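/- The state ρ = Γ/4, where Γ = 1 − Σ_{i=0}^{3}|τᵢ⟩⟨τᵢ| for the Shifts-type UPB {|τᵢ⟩}, is entangled: it is not a convex combination of product states ρ_A⊗ρ_B⊗ρ_C. -/

import Mathlib

open Matrix Finset Real
open scoped ComplexOrder Kronecker

noncomputable section

/-- The three-qubit Hilbert space index: bit triples. -/
abbrev Q3 := Fin 2 × Fin 2 × Fin 2

/-- Inner product `⟨v|w⟩ = ∑ᵢ v(i)* w(i)`. -/
def inn {n : Type*} [Fintype n] (v w : n → ℂ) : ℂ := ∑ i, star (v i) * w i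

/-- Rank-one projector `|v⟩⟨v|`. -/
def proj {n : Type*} (v : n → ℂ) : Matrix n n ℂ := Matrix.vecMulVec v (star v)

/-- Product vector `|a⟩⊗|b⟩⊗|c⟩` on three qubits. -/
def prod3 (a b c : Fin 2 → ℂ) : Q3 → ℂ := fun x => a x.1 * b x.2.1 * c x.2.2

def ket0 : Fin 2 → ℂ := ![1, 0]
def ket1 : Fin 2 → ℂ := ![0, 1]
def ketP : Fin 2 → ℂ := ![(1 / Real.sqrt 2 : ℝ), (1 / Real.sqrt 2 : ℝ)]
def ketM : Fin 2 → ℂ := ![(1 / Real.sqrt 2 : ℝ), (-(1 / Real.sqrt 2) : ℝ)]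
/-- `|0̄⟩ = cos(π/8)|0⟩ + sin(π/8)|1⟩`. -/
def ket0b : Fin 2 → ℂ := ![(Real.cos (π / 8) : ℝ), (Real.sin (π / 8) : ℝ)]
/-- `|1̄⟩ = -sin(π/8)|0⟩ + cos(π/8)|1⟩`. -/
def ket1b : Fin 2 → ℂ := ![(-Real.sin (π / 8) : ℝ), (Real.cos (π / 8) : ℝ)]
/-- `|+̄⟩ = sin(π/8)|0⟩ + cos(π/8)|1⟩`. -/
def ketPb : Fin 2 → ℂ := ![(Real.sin (π / 8) : ℝ), (Real.cos (π / 8) : ℝ)]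
/-- `|−̄⟩ = cos(π/8)|0⟩ - sin(π/8)|1⟩`. -/
def ketMb : Fin 2 → ℂ := ![(Real.cos (π / 8) : ℝ), (-Real.sin (π / 8) : ℝ)]

/-- The four vectors of the Shifts-type unextendible product basis. -/
def tau : Fin 4 → Q3 → ℂ
  | 0 => prod3 ket0b ket1 ketP
  | 1 => prod3 ketPb ket0 ket1
  | 2 => prod3 ket1b ketP ket0
  | 3 => prod3 ketMb ketM ketM

/-- Pauli X. -/
def PX : Matrix (Fin 2) (Fin 2) ℂ := !![0, 1; 1, 0]
/-- Pauli Y. -/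
def PY : Matrix (Fin 2) (Fin 2) ℂ := !![0, -Complex.I; Complex.I, 0]
/-- Pauli Z. -/
def PZ : Matrix (Fin 2) (Fin 2) ℂ := !![1, 0; 0, -1]

/-- The projector onto the subspace complementary to the span of the UPB. -/
def Gam : Matrix Q3 Q3 ℂ := 1 - ∑ i : Fin 4, proj (tau i)

-- aux starts here
lemma inn_prod3 (a b c a' b' c' : Fin 2 → ℂ) :
    inn (prod3 a b c) (prod3 a' b' c') = inn a a' * inn b b' * inn c c' := by
  simp only [inn, prod3, Fintype.sum_prod_type, Fin.sum_univ_two, star_mul']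
  ring

lemma hsc : Real.sin (π/8) ^ 2 + Real.cos (π/8) ^ 2 = 1 := Real.sin_sq_add_cos_sq _
lemma hr : Real.sqrt 2 * Real.sqrt 2 = 2 := Real.mul_self_sqrt (by norm_num)
lemma hrne : Real.sqrt 2 ≠ 0 := by positivity

lemma n0 : inn ket0 ket0 = 1 := by simp [inn, Fin.sum_univ_two, ket0]
lemma n1 : inn ket1 ket1 = 1 := by simp [inn, Fin.sum_univ_two, ket1]
lemma nP : inn ketP ketP = 1 := by
  simp only [inn, Fin.sum_univ_two, ketP, Matrix.cons_val_zero, Matrix.cons_val_one,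
    Matrix.head_cons, Complex.star_def, Complex.conj_ofReal]
  norm_cast
  field_simp
  nlinarith [hr]
lemma nM : inn ketM ketM = 1 := by
  simp only [inn, Fin.sum_univ_two, ketM, Matrix.cons_val_zero, Matrix.cons_val_one,
    Matrix.head_cons, Complex.star_def, Complex.conj_ofReal]
  norm_cast
  field_simp
  nlinarith [hr]
lemma n0b : inn ket0b ket0b = 1 := by
  simp only [inn, Fin.sum_univ_two, ket0b, Matrix.cons_val_zero, Matrix.cons_val_one,
    Matrix.head_cons, Complex.star_def, Complex.conj_ofReal]
  norm_cast
  nlinarith [hsc]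
lemma n1b : inn ket1b ket1b = 1 := by
  simp only [inn, Fin.sum_univ_two, ket1b, Matrix.cons_val_zero, Matrix.cons_val_one,
    Matrix.head_cons, Complex.star_def, Complex.conj_ofReal]
  norm_cast
  nlinarith [hsc]
lemma nPb : inn ketPb ketPb = 1 := by
  simp only [inn, Fin.sum_univ_two, ketPb, Matrix.cons_val_zero, Matrix.cons_val_one,
    Matrix.head_cons, Complex.star_def, Complex.conj_ofReal]
  norm_cast
  nlinarith [hsc]
lemma nMb : inn ketMb ketMb = 1 := by
  simp only [inn, Fin.sum_univ_two, ketMb, Matrix.cons_val_zero, Matrix.cons_val_one,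
    Matrix.head_cons, Complex.star_def, Complex.conj_ofReal]
  norm_cast
  nlinarith [hsc]
lemma z01 : inn ket0 ket1 = 0 := by simp [inn, Fin.sum_univ_two, ket0, ket1]
lemma z10 : inn ket1 ket0 = 0 := by simp [inn, Fin.sum_univ_two, ket0, ket1]
lemma zPM : inn ketP ketM = 0 := by
  simp only [inn, Fin.sum_univ_two, ketP, ketM, Matrix.cons_val_zero, Matrix.cons_val_one,
    Matrix.head_cons, Complex.star_def, Complex.conj_ofReal]
  norm_cast
  ring
lemma zMP : inn ketM ketP = 0 := by
  simp only [inn, Fin.sum_univ_two, ketP, ketM, Matrix.cons_val_zero, Matrix.cons_val_one,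
    Matrix.head_cons, Complex.star_def, Complex.conj_ofReal]
  norm_cast
  ring
lemma z0b1b : inn ket0b ket1b = 0 := by
  simp only [inn, Fin.sum_univ_two, ket0b, ket1b, Matrix.cons_val_zero, Matrix.cons_val_one,
    Matrix.head_cons, Complex.star_def, Complex.conj_ofReal]
  norm_cast
  ring
lemma z1b0b : inn ket1b ket0b = 0 := by
  simp only [inn, Fin.sum_univ_two, ket0b, ket1b, Matrix.cons_val_zero, Matrix.cons_val_one,
    Matrix.head_cons, Complex.star_def, Complex.conj_ofReal]
  norm_cast
  ring
lemma zPbMb : inn ketPb ketMb = 0 := by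
  simp only [inn, Fin.sum_univ_two, ketPb, ketMb, Matrix.cons_val_zero, Matrix.cons_val_one,
    Matrix.head_cons, Complex.star_def, Complex.conj_ofReal]
  norm_cast
  ring
lemma zMbPb : inn ketMb ketPb = 0 := by
  simp only [inn, Fin.sum_univ_two, ketPb, ketMb, Matrix.cons_val_zero, Matrix.cons_val_one,
    Matrix.head_cons, Complex.star_def, Complex.conj_ofReal]
  norm_cast
  ring

lemma inn_tau (i j : Fin 4) : inn (tau i) (tau j) = if i = j then 1 else 0 := by
  fin_cases i <;> fin_cases j <;>
    simp [tau, inn_prod3, n0, n1, nP, nM, n0b, n1b, nPb, nMb,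
      z01, z10, zPM, zMP, z0b1b, z1b0b, zPbMb, zMbPb]

lemma inn_eq_dot (v w : Q3 → ℂ) : star v ⬝ᵥ w = inn v w := rfl

lemma proj_mulVec (u v : Q3 → ℂ) : proj u *ᵥ v = inn u v • u := by
  funext x
  simp only [proj, mulVec, vecMulVec_apply, dotProduct, inn, Pi.smul_apply, smul_eq_mul,
    Finset.sum_mul, Finset.mul_sum, Pi.star_apply]
  apply Finset.sum_congr rfl
  intro y _
  ring

lemma dot_sum_mulVec {ι : Type*} (s : Finset ι) (M : ι → Matrix Q3 Q3 ℂ) (v w : Q3 → ℂ) :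
    v ⬝ᵥ ((∑ i ∈ s, M i) *ᵥ w) = ∑ i ∈ s, v ⬝ᵥ (M i *ᵥ w) := by
  classical
  induction s using Finset.induction_on with
  | empty => simp
  | @insert a s h ih => rw [Finset.sum_insert h, Finset.sum_insert h, add_mulVec, dotProduct_add, ih]

lemma qf_gam (j : Fin 4) : star (tau j) ⬝ᵥ (Gam *ᵥ tau j) = 0 := by
  simp only [Gam, sub_mulVec, one_mulVec, dotProduct_sub, dot_sum_mulVec, proj_mulVec,
    dotProduct_smul, smul_eq_mul, inn_eq_dot, inn_tau]
  fin_cases j <;> simp [Fin.sum_univ_four, inn_tau]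

lemma qf_kron (A B C : Matrix (Fin 2) (Fin 2) ℂ) (a b c : Fin 2 → ℂ) :
    star (prod3 a b c) ⬝ᵥ ((A ⊗ₖ (B ⊗ₖ C)) *ᵥ prod3 a b c)
      = (star a ⬝ᵥ A *ᵥ a) * (star b ⬝ᵥ B *ᵥ b) * (star c ⬝ᵥ C *ᵥ c) := by
  simp only [dotProduct, mulVec, kroneckerMap_apply, prod3, Fintype.sum_prod_type,
    Fin.sum_univ_two, Pi.star_apply, star_mul']
  ring

lemma noTwo (X : Matrix (Fin 2) (Fin 2) ℂ) (hX : X.PosSemidef) (ht : X.trace = 1)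
    (v w : Fin 2 → ℂ) (hd : v 0 * w 1 - v 1 * w 0 ≠ 0)
    (hv : star v ⬝ᵥ X *ᵥ v = 0) (hw : star w ⬝ᵥ X *ᵥ w = 0) : False := by
  have hv' := (hX.dotProduct_mulVec_zero_iff v).mp hv
  have hw' := (hX.dotProduct_mulVec_zero_iff w).mp hw
  have e1 := congrFun hv' 0
  have e2 := congrFun hv' 1
  have e3 := congrFun hw' 0
  have e4 := congrFun hw' 1
  simp only [mulVec, dotProduct, Fin.sum_univ_two, Pi.zero_apply] at e1 e2 e3 e4
  have h00 : X 0 0 = 0 := by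
    have h : X 0 0 * (v 0 * w 1 - v 1 * w 0) = 0 := by linear_combination w 1 * e1 - v 1 * e3
    exact (mul_eq_zero.mp h).resolve_right hd
  have h11 : X 1 1 = 0 := by
    have h : X 1 1 * (v 0 * w 1 - v 1 * w 0) = 0 := by linear_combination v 0 * e4 - w 0 * e2
    exact (mul_eq_zero.mp h).resolve_right hd
  rw [Matrix.trace, Fin.sum_univ_two] at ht
  simp only [Matrix.diag_apply, h00, h11, add_zero] at ht
  exact zero_ne_one ht

lemma hspos : 0 < Real.sin (π/8) :=
  Real.sin_pos_of_pos_of_lt_pi (by positivity) (by linarith [Real.pi_pos])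
lemma hcpos : 0 < Real.cos (π/8) :=
  Real.cos_pos_of_mem_Ioo ⟨by linarith [Real.pi_pos], by linarith [Real.pi_pos]⟩
lemma hslt : Real.sin (π/8) < Real.cos (π/8) := by
  rw [← Real.sin_pi_div_two_sub]
  exact Real.sin_lt_sin_of_lt_of_le_pi_div_two (by linarith [Real.pi_pos]) (by linarith [Real.pi_pos])
    (by linarith [Real.pi_pos])

def aP : Fin 4 → Fin 2 → ℂ
  | 0 => ket0b | 1 => ketPb | 2 => ket1b | 3 => ketMb
def bP : Fin 4 → Fin 2 → ℂ
  | 0 => ket1 | 1 => ket0 | 2 => ketP | 3 => ketM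
def cP : Fin 4 → Fin 2 → ℂ
  | 0 => ketP | 1 => ket1 | 2 => ket0 | 3 => ketM

lemma tau_eq (j : Fin 4) : tau j = prod3 (aP j) (bP j) (cP j) := by
  fin_cases j <;> rfl

/-- determinant-nonvanishing, A-system pairs -/
lemma dA01 : ket0b 0 * ketPb 1 - ket0b 1 * ketPb 0 ≠ 0 := by
  have h1 := hspos; have h2 := hcpos; have h3 := hslt
  set s := Real.sin (π/8) with hs; set c := Real.cos (π/8) with hc
  simp only [ket0b, ketPb, Matrix.cons_val_zero, Matrix.cons_val_one, Matrix.head_cons]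
  intro hz; norm_cast at hz; nlinarith
lemma dA02 : ket0b 0 * ket1b 1 - ket0b 1 * ket1b 0 ≠ 0 := by
  have h1 := hspos; have h2 := hcpos; have h3 := hslt
  set s := Real.sin (π/8) with hs; set c := Real.cos (π/8) with hc
  simp only [ket0b, ket1b, Matrix.cons_val_zero, Matrix.cons_val_one, Matrix.head_cons]
  intro hz; norm_cast at hz; nlinarith
lemma dA03 : ket0b 0 * ketMb 1 - ket0b 1 * ketMb 0 ≠ 0 := by
  have h1 := hspos; have h2 := hcpos; have h3 := hslt
  set s := Real.sin (π/8) with hs; set c := Real.cos (π/8) with hc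
  simp only [ket0b, ketMb, Matrix.cons_val_zero, Matrix.cons_val_one, Matrix.head_cons]
  intro hz; norm_cast at hz; nlinarith
lemma dA12 : ketPb 0 * ket1b 1 - ketPb 1 * ket1b 0 ≠ 0 := by
  have h1 := hspos; have h2 := hcpos; have h3 := hslt
  set s := Real.sin (π/8) with hs; set c := Real.cos (π/8) with hc
  simp only [ketPb, ket1b, Matrix.cons_val_zero, Matrix.cons_val_one, Matrix.head_cons]
  intro hz; norm_cast at hz; nlinarith
lemma dA13 : ketPb 0 * ketMb 1 - ketPb 1 * ketMb 0 ≠ 0 := by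
  have h1 := hspos; have h2 := hcpos; have h3 := hslt
  set s := Real.sin (π/8) with hs; set c := Real.cos (π/8) with hc
  simp only [ketPb, ketMb, Matrix.cons_val_zero, Matrix.cons_val_one, Matrix.head_cons]
  intro hz; norm_cast at hz; nlinarith
lemma dA23 : ket1b 0 * ketMb 1 - ket1b 1 * ketMb 0 ≠ 0 := by
  have h1 := hspos; have h2 := hcpos; have h3 := hslt
  set s := Real.sin (π/8) with hs; set c := Real.cos (π/8) with hc
  simp only [ket1b, ketMb, Matrix.cons_val_zero, Matrix.cons_val_one, Matrix.head_cons]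
  intro hz; norm_cast at hz; nlinarith

lemma hrpos : 0 < 1 / Real.sqrt 2 := by positivity
/-- standard-family pairwise dets -/
lemma d10 : ket1 0 * ket0 1 - ket1 1 * ket0 0 ≠ 0 := by
  simp [ket0, ket1]
lemma d1P : ket1 0 * ketP 1 - ket1 1 * ketP 0 ≠ 0 := by
  have := hrpos
  simp only [ket1, ketP, Matrix.cons_val_zero, Matrix.cons_val_one, Matrix.head_cons]
  intro hz; norm_cast at hz; nlinarith
lemma d1M : ket1 0 * ketM 1 - ket1 1 * ketM 0 ≠ 0 := by
  have := hrpos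
  simp only [ket1, ketM, Matrix.cons_val_zero, Matrix.cons_val_one, Matrix.head_cons]
  intro hz; norm_cast at hz; nlinarith
lemma d0P : ket0 0 * ketP 1 - ket0 1 * ketP 0 ≠ 0 := by
  have := hrpos
  simp only [ket0, ketP, Matrix.cons_val_zero, Matrix.cons_val_one, Matrix.head_cons]
  intro hz; norm_cast at hz; nlinarith
lemma d0M : ket0 0 * ketM 1 - ket0 1 * ketM 0 ≠ 0 := by
  have := hrpos
  simp only [ket0, ketM, Matrix.cons_val_zero, Matrix.cons_val_one, Matrix.head_cons]
  intro hz; norm_cast at hz; nlinarith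
lemma dPM : ketP 0 * ketM 1 - ketP 1 * ketM 0 ≠ 0 := by
  have := hrpos
  simp only [ketP, ketM, Matrix.cons_val_zero, Matrix.cons_val_one, Matrix.head_cons]
  intro hz; norm_cast at hz; nlinarith
lemma dP1 : ketP 0 * ket1 1 - ketP 1 * ket1 0 ≠ 0 := by
  have := hrpos
  simp only [ket1, ketP, Matrix.cons_val_zero, Matrix.cons_val_one, Matrix.head_cons]
  intro hz; norm_cast at hz; nlinarith
lemma dP0 : ketP 0 * ket0 1 - ketP 1 * ket0 0 ≠ 0 := by
  have := hrpos
  simp only [ket0, ketP, Matrix.cons_val_zero, Matrix.cons_val_one, Matrix.head_cons]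
  intro hz; norm_cast at hz; nlinarith


set_option maxHeartbeats 2000000 in
/-- The state `ρ = Γ/4` is entangled: it is not a convex combination of
product states `ρ_A ⊗ ρ_B ⊗ ρ_C`. -/
theorem stmt_6 :
    ¬ ∃ (m : ℕ) (p : Fin m → ℝ)
        (ρA ρB ρC : Fin m → Matrix (Fin 2) (Fin 2) ℂ),
      (∀ i, 0 ≤ p i) ∧ (∑ i, p i = 1) ∧
      (∀ i, (ρA i).PosSemidef ∧ (ρA i).trace = 1) ∧
      (∀ i, (ρB i).PosSemidef ∧ (ρB i).trace = 1) ∧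
      (∀ i, (ρC i).PosSemidef ∧ (ρC i).trace = 1) ∧
      (1 / 4 : ℂ) • Gam = ∑ i, (p i : ℂ) • (ρA i ⊗ₖ (ρB i ⊗ₖ ρC i)) := by
  rintro ⟨m, p, ρA, ρB, ρC, hp, hps, hA, hB, hC, heq⟩
  obtain ⟨i0, hi0⟩ : ∃ i, p i ≠ 0 := by
    by_contra h; push_neg at h
    rw [Finset.sum_eq_zero (fun i _ => h i)] at hps; exact zero_ne_one hps
  have key : ∀ j : Fin 4,
      (star (aP j) ⬝ᵥ ρA i0 *ᵥ aP j) = 0 ∨ (star (bP j) ⬝ᵥ ρB i0 *ᵥ bP j) = 0 ∨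
      (star (cP j) ⬝ᵥ ρC i0 *ᵥ cP j) = 0 := by
    intro j
    have h0 : star (tau j) ⬝ᵥ (((1/4 : ℂ) • Gam) *ᵥ tau j) = 0 := by
      rw [Matrix.smul_mulVec, dotProduct_smul, qf_gam, smul_zero]
    rw [heq, dot_sum_mulVec] at h0
    have hterm : ∀ i ∈ (Finset.univ : Finset (Fin m)),
        (0:ℂ) ≤ star (tau j) ⬝ᵥ (((p i : ℂ) • (ρA i ⊗ₖ (ρB i ⊗ₖ ρC i))) *ᵥ tau j) := by
      intro i _
      rw [Matrix.smul_mulVec, dotProduct_smul, smul_eq_mul, tau_eq, qf_kron]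
      exact mul_nonneg (Complex.zero_le_real.mpr (hp i))
        (mul_nonneg (mul_nonneg ((hA i).1.dotProduct_mulVec_nonneg _) ((hB i).1.dotProduct_mulVec_nonneg _)) ((hC i).1.dotProduct_mulVec_nonneg _))
    have hz := (Finset.sum_eq_zero_iff_of_nonneg hterm).mp h0 i0 (Finset.mem_univ _)
    rw [Matrix.smul_mulVec, dotProduct_smul, smul_eq_mul, tau_eq, qf_kron] at hz
    have hpz : ((p i0 : ℂ)) ≠ 0 := by exact_mod_cast hi0
    have h2 := (mul_eq_zero.mp hz).resolve_left hpz
    rcases mul_eq_zero.mp h2 with h | h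
    · rcases mul_eq_zero.mp h with h' | h'
      · exact Or.inl h'
      · exact Or.inr (Or.inl h')
    · exact Or.inr (Or.inr h)
  obtain hAp := hA i0; obtain hBp := hB i0; obtain hCp := hC i0
  have K0 := key 0; have K1 := key 1; have K2 := key 2; have K3 := key 3
  simp only [show aP 0 = ket0b from rfl, show aP 1 = ketPb from rfl,
    show aP 2 = ket1b from rfl, show aP 3 = ketMb from rfl,
    show bP 0 = ket1 from rfl, show bP 1 = ket0 from rfl,
    show bP 2 = ketP from rfl, show bP 3 = ketM from rfl,
    show cP 0 = ketP from rfl, show cP 1 = ket1 from rfl,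
    show cP 2 = ket0 from rfl, show cP 3 = ketM from rfl] at K0 K1 K2 K3
  rcases K0 with h0|h0|h0 <;> rcases K1 with h1|h1|h1 <;> rcases K2 with h2|h2|h2 <;>
    rcases K3 with h3|h3|h3 <;>
    first
      | exact noTwo _ hAp.1 hAp.2 _ _ dA01 h0 h1
      | exact noTwo _ hAp.1 hAp.2 _ _ dA02 h0 h2
      | exact noTwo _ hAp.1 hAp.2 _ _ dA03 h0 h3
      | exact noTwo _ hAp.1 hAp.2 _ _ dA12 h1 h2
      | exact noTwo _ hAp.1 hAp.2 _ _ dA13 h1 h3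
      | exact noTwo _ hAp.1 hAp.2 _ _ dA23 h2 h3
      | exact noTwo _ hBp.1 hBp.2 _ _ d10 h0 h1
      | exact noTwo _ hBp.1 hBp.2 _ _ d1P h0 h2
      | exact noTwo _ hBp.1 hBp.2 _ _ d1M h0 h3
      | exact noTwo _ hBp.1 hBp.2 _ _ d0P h1 h2
      | exact noTwo _ hBp.1 hBp.2 _ _ d0M h1 h3
      | exact noTwo _ hBp.1 hBp.2 _ _ dPM h2 h3
      | exact noTwo _ hCp.1 hCp.2 _ _ dP1 h0 h1
      | exact noTwo _ hCp.1 hCp.2 _ _ dP0 h0 h2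
      | exact noTwo _ hCp.1 hCp.2 _ _ dPM h0 h3
      | exact noTwo _ hCp.1 hCp.2 _ _ d10 h1 h2
      | exact noTwo _ hCp.1 hCp.2 _ _ d1M h1 h3
      | exact noTwo _ hCp.1 hCp.2 _ _ d0M h2 h3
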